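/- Let h > 0, σ > 0, Ē > 0, ζ ∈ (0,1), P > Ē/(ζ·h). For the single-carrier TS problem, for every ε > 0 there exist feasible (α₁, α₂, p₁, p₂) with ζ·α₂·h·p₂ ≥ Ē and α₁·p₁ + α₂·p₂ ≤ P (no peak constraint) such that α₁·log₂(1 + h·p₁/σ²) > log₂(1 + (h·P − Ē/ζ)/σ²) − ε. -/

import Mathlib

/-- Achievability for Proposition 4 with no peak power constraint: the TS rate
can be made arbitrarily close to the PS rate log₂(1 + (h·P − Ē/ζ)/σ²). -/
theorem stmt_18 (h σ E ζ P : ℝ) (hh : 0 < h) (hσ : 0 < σ) (hE : 0 < E)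
    (hζ0 : 0 < ζ) (hζ1 : ζ < 1) (hP : E / (ζ * h) < P) :
    ∀ ε : ℝ, 0 < ε →
      ∃ α₁ α₂ p₁ p₂ : ℝ, 0 ≤ α₁ ∧ 0 ≤ α₂ ∧ α₁ + α₂ ≤ 1 ∧ 0 ≤ p₁ ∧ 0 ≤ p₂ ∧
        ζ * α₂ * h * p₂ ≥ E ∧ α₁ * p₁ + α₂ * p₂ ≤ P ∧
        α₁ * Real.logb 2 (1 + h * p₁ / σ ^ 2) >
          Real.logb 2 (1 + (h * P - E / ζ) / σ ^ 2) - ε := by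
  intro ε hε
  have hσ2 : (0 : ℝ) < σ ^ 2 := by positivity
  have hζh : 0 < ζ * h := by positivity
  set D : ℝ := P - E / (ζ * h) with hDdef
  have hD : 0 < D := by simp [hDdef]; linarith
  have hhD : h * D = h * P - E / ζ := by
    field_simp [hDdef]
    rw [hDdef]
    field_simp
  set L : ℝ := Real.logb 2 (1 + (h * P - E / ζ) / σ ^ 2) with hLdef
  have hL0 : 0 ≤ L := by
    apply Real.logb_nonneg (by norm_num)
    have : 0 < (h * P - E / ζ) / σ ^ 2 := by
      rw [← hhD]; positivity
    linarith
  set δ : ℝ := min (ε / (L + 1)) (1 / 2) with hδdef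
  have hδpos : 0 < δ := by
    apply lt_min (by positivity) (by norm_num)
  have hδhalf : δ ≤ 1 / 2 := min_le_right _ _
  have hδε : δ * L < ε := by
    have h1 : δ * L ≤ (ε / (L + 1)) * L := by
      apply mul_le_mul_of_nonneg_right (min_le_left _ _) hL0
    have h2 : (ε / (L + 1)) * L < ε := by
      rw [div_mul_eq_mul_div, div_lt_iff₀ (by linarith)]
      nlinarith
    linarith
  set α₁ : ℝ := 1 - δ with hα₁def
  have hα₁pos : 0 < α₁ := by simp [hα₁def]; linarith
  have hα₁le : α₁ ≤ 1 := by simp [hα₁def]; linarith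
  refine ⟨α₁, δ, D / α₁, E / (ζ * h * δ), le_of_lt hα₁pos, le_of_lt hδpos,
    by simp [hα₁def], by positivity, by positivity, ?_, ?_, ?_⟩
  · have : ζ * δ * h * (E / (ζ * h * δ)) = E := by
      field_simp
    rw [this]
  · have h1 : α₁ * (D / α₁) = D := by field_simp
    have h2 : δ * (E / (ζ * h * δ)) = E / (ζ * h) := by
      field_simp
    rw [h1, h2, hDdef]
    linarith
  · have hp1 : h * P - E / ζ ≤ h * (D / α₁) := by
      rw [← hhD]
      have : D ≤ D / α₁ := by
        rw [le_div_iff₀ hα₁pos]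
        nlinarith
      nlinarith
    have hlog : L ≤ Real.logb 2 (1 + h * (D / α₁) / σ ^ 2) := by
      rw [hLdef]
      have hpos : 0 < (h * P - E / ζ) / σ ^ 2 := by rw [← hhD]; positivity
      gcongr
      linarith
    calc L - ε < L - δ * L := by linarith
    _ = α₁ * L := by ring
    _ ≤ α₁ * Real.logb 2 (1 + h * (D / α₁) / σ ^ 2) := by
        apply mul_le_mul_of_nonneg_left hlog (le_of_lt hα₁pos)
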